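/- Let n, P ∈ ℕ, T ∈ ℕ, let W ⊆ ℝⁿ, and for each p ∈ [P] let f_p : ℝⁿ → ℝ be convex. Let ρ_1 ≤ … ≤ ρ_T be positive reals with ρ_T ≤ ρmax, let wᵗ⁺¹ ∈ ℝⁿ (t ∈ [T]), let zᵗ_p ∈ W (t ∈ [T+1], p ∈ [P]), and let λᵗ_p ∈ ℝⁿ satisfy λᵗ⁺¹_p = λᵗ_p + ρ_t(wᵗ⁺¹ − zᵗ⁺¹_p) for t ∈ [T], p ∈ [P]; define λ̃ᵗ_p := λᵗ_p + ρ_t(wᵗ⁺¹ − zᵗ_p). Let U₂ ≥ 0 satisfy Σ_{p=1}^P ‖u_p − u'_p‖² ≤ U₂ for all u, u' ∈ W^P. Fix w ∈ ℝⁿ, z ∈ W^P, λ ∈ (ℝⁿ)^P, and define the averages w^(T) := (1/T)Σ_{t=1}^T wᵗ⁺¹, z^(T)_p := (1/T)Σ_{t=1}^T zᵗ_p, λ^(T)_p := (1/T)Σ_{t=1}^T λ̃ᵗ_p, and F(z) := Σ_{p=1}^P f_p(z_p). Then (1/T)·Σ_{t=1}^T Σ_{p=1}^P [ f_p(zᵗ_p)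 − f_p(z_p) − ⟨λᵗ⁺¹_p, zᵗ⁺¹_p − z_p⟩ + ⟨λ̃ᵗ_p, wᵗ⁺¹ − w⟩ ] ≥ F(z^(T)) − F(z) + Σ_{p=1}^P [ ⟨w^(T) − w, λ_p⟩ − ⟨z^(T)_p − z_p, λ_p⟩ − ⟨λ^(T)_p − λ_p, w − z_p⟩ ] − (1/T)·( Σ_{p=1}^P ⟨λ_p, z^{T+1}_p − z¹_p⟩ + U₂·ρmax/2 + (1/(2ρ_1))·Σ_{p=1}^P ‖λ_p − λ¹_p‖² ). -/

import Mathlib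

open scoped RealInnerProductSpace

section Aux

variable {E : Type*} [NormedAddCommGroup E] [InnerProductSpace ℝ E]

private lemma key_ident (ρ : ℝ) (hρ : 0 < ρ) (w' zt zt' l lb zb wb : E) :
    (-(⟪l + ρ•(w'-zt'), zt' - zb⟫) + ⟪l + ρ•(w'-zt), w' - wb⟫)
      - (⟪w' - wb, lb⟫ - ⟪zt - zb, lb⟫ - ⟪(l + ρ•(w'-zt)) - lb, wb - zb⟫)
    = ρ/2 * ‖w' - zt‖^2
      + (1/(2*ρ)) * (‖(l + ρ•(w'-zt')) - lb‖^2 - ‖l - lb‖^2)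
      + ρ/2 * (‖zt' - zb‖^2 - ‖zt - zb‖^2)
      + ⟪lb, zt - zt'⟫ := by
  have h : ∀ x y : E, ‖x - y‖^2 = ⟪x,x⟫ - 2*⟪x,y⟫ + ⟪y,y⟫ := by
    intro x y
    rw [← real_inner_self_eq_norm_sq]
    simp only [inner_sub_left, inner_sub_right, real_inner_comm]
    ring
  simp only [h, inner_sub_left, inner_sub_right, inner_add_left, inner_add_right,
    real_inner_smul_left, real_inner_smul_right]
  simp only [real_inner_comm]
  field_simp
  ring

private lemma tele_sum (g : ℕ → ℝ) (T : ℕ) :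
    ∑ t ∈ Finset.Icc 1 T, (g t - g (t+1)) = g 1 - g (T+1) := by
  induction T with
  | zero => simp
  | succ T ih =>
      rw [Finset.sum_Icc_succ_top (by omega : 1 ≤ T + 1), ih]; ring

private lemma abel_dec (c b : ℕ → ℝ) (hb : ∀ t, 0 ≤ b t) :
    ∀ T, 1 ≤ T → (∀ s t, 1 ≤ s → s ≤ t → t ≤ T → c t ≤ c s) →
      c T * b (T+1) - c 1 * b 1 ≤ ∑ t ∈ Finset.Icc 1 T, c t * (b (t+1) - b t) := by
  intro T hT
  induction T, hT using Nat.le_induction with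
  | base =>
      intro _
      rw [Finset.Icc_self, Finset.sum_singleton]
      have := mul_sub (c 1) (b (1+1)) (b 1)
      linarith
  | succ T hT ih =>
      intro hc
      rw [Finset.sum_Icc_succ_top (by omega : 1 ≤ T + 1)]
      have h1 := ih (fun s t hs hst htT => hc s t hs hst (by omega))
      have h2 : 0 ≤ (c T - c (T+1)) * b (T+1) :=
        mul_nonneg (sub_nonneg.2 (hc T (T+1) hT (by omega) le_rfl)) (hb (T+1))
      nlinarith

private lemma abel_inc (r a : ℕ → ℝ) (U : ℝ) (ha : ∀ t, 0 ≤ a t) (hr1 : 0 ≤ r 1) :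
    ∀ T, 1 ≤ T → (∀ s t, 1 ≤ s → s ≤ t → t ≤ T → r s ≤ r t) →
      (∀ t, 1 ≤ t → t ≤ T + 1 → a t ≤ U) →
      r T * a (T+1) - r T * U ≤ ∑ t ∈ Finset.Icc 1 T, r t * (a (t+1) - a t) := by
  intro T hT
  induction T, hT using Nat.le_induction with
  | base =>
      intro _ haU
      rw [Finset.Icc_self, Finset.sum_singleton]
      have h1 : a 1 ≤ U := haU 1 le_rfl (by omega)
      nlinarith [mul_nonneg hr1 (sub_nonneg.2 h1)]
  | succ T hT ih =>
      intro hmono haU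
      rw [Finset.sum_Icc_succ_top (by omega : 1 ≤ T + 1)]
      have h1 := ih (fun s t hs hst htT => hmono s t hs hst (by omega))
                    (fun t h1t htT => haU t h1t (by omega))
      have hrT : r T ≤ r (T+1) := hmono T (T+1) hT (by omega) le_rfl
      have h2 : 0 ≤ (r (T+1) - r T) * (U - a (T+1)) :=
        mul_nonneg (sub_nonneg.2 hrT)
          (sub_nonneg.2 (haU (T+1) (by omega) (by omega)))
      nlinarith

private lemma avg_inner (s : Finset ℕ) (c : ℝ) (v : ℕ → E) (vb y x : E)
    (hx : x = c • ∑ t ∈ s, v t) (hc : c * s.card = 1) :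
    ⟪x - vb, y⟫ = c * ∑ t ∈ s, ⟪v t - vb, y⟫ := by
  have h1 : ∑ t ∈ s, ⟪v t - vb, y⟫ = (∑ t ∈ s, ⟪v t, y⟫) - (s.card : ℝ) * ⟪vb, y⟫ := by
    simp [inner_sub_left, Finset.sum_sub_distrib, Finset.sum_const, nsmul_eq_mul]
  rw [h1, hx, inner_sub_left, real_inner_smul_left, sum_inner, mul_sub, ← mul_assoc,
    hc, one_mul]

end Aux

/-- Lemma A.3: the lower bound on the averaged left-hand side `(1/T)Σ_t LHSᵗ(w, z)` in
the convergence analysis of the DP inexact ADMM algorithm. -/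
theorem averaged_LHS_lower_bound
    (n P T : ℕ) (hT : 1 ≤ T)
    (W : Set (EuclideanSpace ℝ (Fin n)))
    (f : Fin P → EuclideanSpace ℝ (Fin n) → ℝ)
    (hf : ∀ p, ConvexOn ℝ Set.univ (f p))
    (ρ : ℕ → ℝ) (ρmax : ℝ)
    (hρpos : ∀ t ∈ Finset.Icc 1 T, 0 < ρ t)
    (hρmono : ∀ s ∈ Finset.Icc 1 T, ∀ t ∈ Finset.Icc 1 T, s ≤ t → ρ s ≤ ρ t)
    (hρmax : ρ T ≤ ρmax)
    (w : ℕ → EuclideanSpace ℝ (Fin n))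
    (z lam : ℕ → Fin P → EuclideanSpace ℝ (Fin n))
    (hzW : ∀ t ∈ Finset.Icc 1 (T + 1), ∀ p, z t p ∈ W)
    (hlam : ∀ t ∈ Finset.Icc 1 T, ∀ p,
      lam (t + 1) p = lam t p + ρ t • (w (t + 1) - z (t + 1) p))
    (lamTil : ℕ → Fin P → EuclideanSpace ℝ (Fin n))
    (hlamTil : ∀ t ∈ Finset.Icc 1 T, ∀ p,
      lamTil t p = lam t p + ρ t • (w (t + 1) - z t p))
    (U₂ : ℝ)
    (hU₂ : ∀ u u' : Fin P → EuclideanSpace ℝ (Fin n),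
      (∀ p, u p ∈ W) → (∀ p, u' p ∈ W) → (∑ p, ‖u p - u' p‖ ^ 2) ≤ U₂)
    (wbar : EuclideanSpace ℝ (Fin n))
    (zbar lambar : Fin P → EuclideanSpace ℝ (Fin n)) (hzbarW : ∀ p, zbar p ∈ W)
    (wavg : EuclideanSpace ℝ (Fin n)) (zavg lamavg : Fin P → EuclideanSpace ℝ (Fin n))
    (hwavg : wavg = (T : ℝ)⁻¹ • ∑ t ∈ Finset.Icc 1 T, w (t + 1))
    (hzavg : ∀ p, zavg p = (T : ℝ)⁻¹ • ∑ t ∈ Finset.Icc 1 T, z t p)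
    (hlamavg : ∀ p, lamavg p = (T : ℝ)⁻¹ • ∑ t ∈ Finset.Icc 1 T, lamTil t p) :
    (T : ℝ)⁻¹ * ∑ t ∈ Finset.Icc 1 T, ∑ p,
        (f p (z t p) - f p (zbar p) - ⟪lam (t + 1) p, z (t + 1) p - zbar p⟫
          + ⟪lamTil t p, w (t + 1) - wbar⟫) ≥
      (∑ p, f p (zavg p)) - (∑ p, f p (zbar p))
        + (∑ p, (⟪wavg - wbar, lambar p⟫ - ⟪zavg p - zbar p, lambar p⟫
            - ⟪lamavg p - lambar p, wbar - zbar p⟫))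
        - (T : ℝ)⁻¹ * ((∑ p, ⟪lambar p, z (T + 1) p - z 1 p⟫) + U₂ * ρmax / 2
            + 1 / (2 * ρ 1) * ∑ p, ‖lambar p - lam 1 p‖ ^ 2) := by
  classical
  have hTpos : (0:ℝ) < (T:ℝ) := by exact_mod_cast hT
  have hTne : (T:ℝ) ≠ 0 := ne_of_gt hTpos
  have hcard : (Finset.Icc 1 T).card = T := by simp [Nat.card_Icc]
  have hcT : (T:ℝ)⁻¹ * ((Finset.Icc 1 T).card : ℝ) = 1 := by
    rw [hcard]; exact inv_mul_cancel₀ hTne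
  have hTmem : T ∈ Finset.Icc 1 T := Finset.mem_Icc.2 ⟨hT, le_rfl⟩
  have h1mem : (1:ℕ) ∈ Finset.Icc 1 T := Finset.mem_Icc.2 ⟨le_rfl, hT⟩
  have hU₂0 : 0 ≤ U₂ := by
    have := hU₂ zbar zbar hzbarW hzbarW
    simpa using this
  -- pointwise identity
  have hpt : ∀ t ∈ Finset.Icc 1 T, ∀ p : Fin P,
      ((-(⟪lam (t+1) p, z (t+1) p - zbar p⟫) + ⟪lamTil t p, w (t+1) - wbar⟫)
        - (⟪w (t+1) - wbar, lambar p⟫ - ⟪z t p - zbar p, lambar p⟫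
            - ⟪lamTil t p - lambar p, wbar - zbar p⟫))
      = ρ t / 2 * ‖w (t+1) - z t p‖^2
        + (1/(2*ρ t)) * (‖lam (t+1) p - lambar p‖^2 - ‖lam t p - lambar p‖^2)
        + ρ t / 2 * (‖z (t+1) p - zbar p‖^2 - ‖z t p - zbar p‖^2)
        + ⟪lambar p, z t p - z (t+1) p⟫ := by
    intro t ht p
    rw [hlam t ht p, hlamTil t ht p]
    exact key_ident (ρ t) (hρpos t ht) (w (t+1)) (z t p) (z (t+1) p) (lam t p)
      (lambar p) (zbar p) wbar
  -- row identity (summed over p)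
  have hrow : ∀ t ∈ Finset.Icc 1 T,
      (∑ p, ((-(⟪lam (t+1) p, z (t+1) p - zbar p⟫) + ⟪lamTil t p, w (t+1) - wbar⟫)
        - (⟪w (t+1) - wbar, lambar p⟫ - ⟪z t p - zbar p, lambar p⟫
            - ⟪lamTil t p - lambar p, wbar - zbar p⟫)))
      = ρ t / 2 * (∑ p, ‖w (t+1) - z t p‖^2)
        + (1/(2*ρ t)) * ((∑ p, ‖lam (t+1) p - lambar p‖^2) - ∑ p, ‖lam t p - lambar p‖^2)
        + ρ t / 2 * ((∑ p, ‖z (t+1) p - zbar p‖^2) - ∑ p, ‖z t p - zbar p‖^2)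
        + ∑ p, ⟪lambar p, z t p - z (t+1) p⟫ := by
    intro t ht
    rw [Finset.sum_congr rfl (fun p _ => hpt t ht p)]
    rw [Finset.sum_add_distrib, Finset.sum_add_distrib, Finset.sum_add_distrib,
      ← Finset.mul_sum, ← Finset.mul_sum, ← Finset.mul_sum,
      Finset.sum_sub_distrib, Finset.sum_sub_distrib]
  -- bound for the lambda telescoping term
  have hB2 : (1/(2*ρ T)) * (∑ p, ‖lam (T+1) p - lambar p‖^2)
      - (1/(2*ρ 1)) * (∑ p, ‖lam 1 p - lambar p‖^2)
      ≤ ∑ t ∈ Finset.Icc 1 T, (1/(2*ρ t)) *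
          ((∑ p, ‖lam (t+1) p - lambar p‖^2) - ∑ p, ‖lam t p - lambar p‖^2) := by
    refine abel_dec (fun t => 1/(2*ρ t)) (fun t => ∑ p, ‖lam t p - lambar p‖^2)
      (fun t => Finset.sum_nonneg fun p _ => sq_nonneg _) T hT ?_
    intro s t hs hst htT
    have hsI : s ∈ Finset.Icc 1 T := Finset.mem_Icc.2 ⟨hs, hst.trans htT⟩
    have htI : t ∈ Finset.Icc 1 T := Finset.mem_Icc.2 ⟨hs.trans hst, htT⟩
    have h1 := hρpos s hsI
    have h2 := hρpos t htI
    have h3 := hρmono s hsI t htI hst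
    apply one_div_le_one_div_of_le (by linarith) (by linarith)
  have hB2' : 0 ≤ (1/(2*ρ T)) * (∑ p, ‖lam (T+1) p - lambar p‖^2) := by
    have := hρpos T hTmem
    have h4 : (0:ℝ) ≤ 1/(2*ρ T) := by positivity
    exact mul_nonneg h4 (Finset.sum_nonneg fun p _ => sq_nonneg _)
  -- bound for the z telescoping term
  have hB3 : ρ T * (∑ p, ‖z (T+1) p - zbar p‖^2) - ρ T * U₂
      ≤ ∑ t ∈ Finset.Icc 1 T, ρ t *
          ((∑ p, ‖z (t+1) p - zbar p‖^2) - ∑ p, ‖z t p - zbar p‖^2) := by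
    refine abel_inc ρ (fun t => ∑ p, ‖z t p - zbar p‖^2) U₂
      (fun t => Finset.sum_nonneg fun p _ => sq_nonneg _) (hρpos 1 h1mem).le T hT ?_ ?_
    · intro s t hs hst htT
      exact hρmono s (Finset.mem_Icc.2 ⟨hs, hst.trans htT⟩) t
        (Finset.mem_Icc.2 ⟨hs.trans hst, htT⟩) hst
    · intro t h1t htT
      exact hU₂ (fun p => z t p) zbar (fun p => hzW t (Finset.mem_Icc.2 ⟨h1t, htT⟩) p) hzbarW
  have hB3' : 0 ≤ ρ T * (∑ p, ‖z (T+1) p - zbar p‖^2) :=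
    mul_nonneg (hρpos T hTmem).le (Finset.sum_nonneg fun p _ => sq_nonneg _)
  have hB3'' : ρ T * U₂ ≤ ρmax * U₂ := mul_le_mul_of_nonneg_right hρmax hU₂0
  have hB3div : ∑ t ∈ Finset.Icc 1 T, ρ t / 2 *
        ((∑ p, ‖z (t+1) p - zbar p‖^2) - ∑ p, ‖z t p - zbar p‖^2)
      = (∑ t ∈ Finset.Icc 1 T, ρ t *
        ((∑ p, ‖z (t+1) p - zbar p‖^2) - ∑ p, ‖z t p - zbar p‖^2)) / 2 := by
    rw [Finset.sum_div]
    exact Finset.sum_congr rfl fun t _ => by ring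
  -- first (nonnegative) term
  have hB1 : 0 ≤ ∑ t ∈ Finset.Icc 1 T, ρ t / 2 * (∑ p, ‖w (t+1) - z t p‖^2) := by
    refine Finset.sum_nonneg fun t ht => ?_
    have := hρpos t ht
    exact mul_nonneg (by linarith) (Finset.sum_nonneg fun p _ => sq_nonneg _)
  -- telescoping inner-product term
  have hB4 : ∑ t ∈ Finset.Icc 1 T, ∑ p, ⟪lambar p, z t p - z (t+1) p⟫
      = ∑ p, ⟪lambar p, z 1 p - z (T+1) p⟫ := by
    rw [Finset.sum_comm]
    refine Finset.sum_congr rfl fun p _ => ?_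
    have h1 : ∀ t, ⟪lambar p, z t p - z (t+1) p⟫
        = (fun s => ⟪lambar p, z s p⟫) t - (fun s => ⟪lambar p, z s p⟫) (t+1) :=
      fun t => inner_sub_right _ _ _
    rw [Finset.sum_congr rfl fun t _ => h1 t, tele_sum]
    exact (inner_sub_right _ _ _).symm
  -- core inequality
  have hcore : ∑ t ∈ Finset.Icc 1 T,
      ∑ p, ((-(⟪lam (t+1) p, z (t+1) p - zbar p⟫) + ⟪lamTil t p, w (t+1) - wbar⟫)
        - (⟪w (t+1) - wbar, lambar p⟫ - ⟪z t p - zbar p, lambar p⟫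
            - ⟪lamTil t p - lambar p, wbar - zbar p⟫))
      ≥ (∑ p, ⟪lambar p, z 1 p - z (T+1) p⟫) - U₂ * ρmax / 2
        - (1/(2*ρ 1)) * (∑ p, ‖lam 1 p - lambar p‖^2) := by
    rw [Finset.sum_congr rfl hrow]
    rw [Finset.sum_add_distrib, Finset.sum_add_distrib, Finset.sum_add_distrib, hB4, hB3div]
    linarith
  -- flip signs to match the stated error terms
  have hflip1 : ∑ p, ⟪lambar p, z 1 p - z (T+1) p⟫
      = -∑ p, ⟪lambar p, z (T+1) p - z 1 p⟫ := by
    rw [← Finset.sum_neg_distrib]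
    exact Finset.sum_congr rfl fun p _ => by rw [← inner_neg_right, neg_sub]
  have hflip2 : ∑ p, ‖lam 1 p - lambar p‖^2 = ∑ p, ‖lambar p - lam 1 p‖^2 :=
    Finset.sum_congr rfl fun p _ => by rw [norm_sub_rev]
  -- linear part identity
  have hLin : (∑ p, (⟪wavg - wbar, lambar p⟫ - ⟪zavg p - zbar p, lambar p⟫
        - ⟪lamavg p - lambar p, wbar - zbar p⟫))
      = (T:ℝ)⁻¹ * ∑ t ∈ Finset.Icc 1 T,
          ∑ p, (⟪w (t+1) - wbar, lambar p⟫ - ⟪z t p - zbar p, lambar p⟫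
            - ⟪lamTil t p - lambar p, wbar - zbar p⟫) := by
    have hswap : ∑ t ∈ Finset.Icc 1 T,
          ∑ p, (⟪w (t+1) - wbar, lambar p⟫ - ⟪z t p - zbar p, lambar p⟫
            - ⟪lamTil t p - lambar p, wbar - zbar p⟫)
        = ∑ p, ∑ t ∈ Finset.Icc 1 T,
            (⟪w (t+1) - wbar, lambar p⟫ - ⟪z t p - zbar p, lambar p⟫
              - ⟪lamTil t p - lambar p, wbar - zbar p⟫) := Finset.sum_comm
    rw [hswap, Finset.mul_sum]
    refine Finset.sum_congr rfl fun p _ => ?_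
    have e1 := avg_inner (Finset.Icc 1 T) (T:ℝ)⁻¹ (fun t => w (t+1)) wbar (lambar p)
      wavg hwavg hcT
    have e2 := avg_inner (Finset.Icc 1 T) (T:ℝ)⁻¹ (fun t => z t p) (zbar p) (lambar p)
      (zavg p) (hzavg p) hcT
    have e3 := avg_inner (Finset.Icc 1 T) (T:ℝ)⁻¹ (fun t => lamTil t p) (lambar p)
      (wbar - zbar p) (lamavg p) (hlamavg p) hcT
    rw [e1, e2, e3, ← mul_sub, ← mul_sub, ← Finset.sum_sub_distrib, ← Finset.sum_sub_distrib]
  -- Jensen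
  have hJen : ∀ p, f p (zavg p) ≤ (T:ℝ)⁻¹ * ∑ t ∈ Finset.Icc 1 T, f p (z t p) := by
    intro p
    have h1 : zavg p = ∑ t ∈ Finset.Icc 1 T, (T:ℝ)⁻¹ • z t p := by
      rw [hzavg p, Finset.smul_sum]
    rw [h1, Finset.mul_sum]
    refine (hf p).map_sum_le (fun t _ => by positivity) ?_ (fun t _ => Set.mem_univ _)
    rw [Finset.sum_const, hcard, nsmul_eq_mul]
    exact mul_inv_cancel₀ hTne
  have hJenS : ∑ p, f p (zavg p)
      ≤ (T:ℝ)⁻¹ * ∑ t ∈ Finset.Icc 1 T, ∑ p, f p (z t p) := by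
    calc ∑ p, f p (zavg p)
        ≤ ∑ p, (T:ℝ)⁻¹ * ∑ t ∈ Finset.Icc 1 T, f p (z t p) :=
          Finset.sum_le_sum fun p _ => hJen p
      _ = (T:ℝ)⁻¹ * ∑ p, ∑ t ∈ Finset.Icc 1 T, f p (z t p) := by rw [Finset.mul_sum]
      _ = (T:ℝ)⁻¹ * ∑ t ∈ Finset.Icc 1 T, ∑ p, f p (z t p) := by rw [Finset.sum_comm]
  -- split the total sum
  have e_total : ∑ t ∈ Finset.Icc 1 T, ∑ p,
        (f p (z t p) - f p (zbar p) - ⟪lam (t + 1) p, z (t + 1) p - zbar p⟫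
          + ⟪lamTil t p, w (t + 1) - wbar⟫)
      = (∑ t ∈ Finset.Icc 1 T, ∑ p, f p (z t p))
        - (T:ℝ) * (∑ p, f p (zbar p))
        + ∑ t ∈ Finset.Icc 1 T, ∑ p,
            (-(⟪lam (t+1) p, z (t+1) p - zbar p⟫) + ⟪lamTil t p, w (t+1) - wbar⟫) := by
    have h1 : ∀ t, ∑ p, (f p (z t p) - f p (zbar p) - ⟪lam (t + 1) p, z (t + 1) p - zbar p⟫
          + ⟪lamTil t p, w (t + 1) - wbar⟫)
        = (∑ p, f p (z t p)) - (∑ p, f p (zbar p))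
          + ∑ p, (-(⟪lam (t+1) p, z (t+1) p - zbar p⟫) + ⟪lamTil t p, w (t+1) - wbar⟫) := by
      intro t
      rw [← Finset.sum_sub_distrib, ← Finset.sum_add_distrib]
      exact Finset.sum_congr rfl fun p _ => by ring
    rw [Finset.sum_congr rfl fun t _ => h1 t, Finset.sum_add_distrib,
      Finset.sum_sub_distrib, Finset.sum_const, hcard, nsmul_eq_mul]
  -- relate the row sums
  have hsub : ∑ t ∈ Finset.Icc 1 T,
      ∑ p, ((-(⟪lam (t+1) p, z (t+1) p - zbar p⟫) + ⟪lamTil t p, w (t+1) - wbar⟫)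
        - (⟪w (t+1) - wbar, lambar p⟫ - ⟪z t p - zbar p, lambar p⟫
            - ⟪lamTil t p - lambar p, wbar - zbar p⟫))
      = (∑ t ∈ Finset.Icc 1 T, ∑ p,
          (-(⟪lam (t+1) p, z (t+1) p - zbar p⟫) + ⟪lamTil t p, w (t+1) - wbar⟫))
        - ∑ t ∈ Finset.Icc 1 T, ∑ p,
            (⟪w (t+1) - wbar, lambar p⟫ - ⟪z t p - zbar p, lambar p⟫
              - ⟪lamTil t p - lambar p, wbar - zbar p⟫) := by
    rw [← Finset.sum_sub_distrib]
    exact Finset.sum_congr rfl fun t _ => by rw [← Finset.sum_sub_distrib]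
  -- put everything together
  set SR := ∑ t ∈ Finset.Icc 1 T, ∑ p,
      (-(⟪lam (t+1) p, z (t+1) p - zbar p⟫) + ⟪lamTil t p, w (t+1) - wbar⟫) with hSR
  set ST := ∑ t ∈ Finset.Icc 1 T, ∑ p,
      (⟪w (t+1) - wbar, lambar p⟫ - ⟪z t p - zbar p, lambar p⟫
        - ⟪lamTil t p - lambar p, wbar - zbar p⟫) with hST
  set Erf := (∑ p, ⟪lambar p, z (T + 1) p - z 1 p⟫) + U₂ * ρmax / 2
      + 1 / (2 * ρ 1) * ∑ p, ‖lambar p - lam 1 p‖ ^ 2 with hErf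
  have hcore' : SR - ST ≥ -Erf := by
    rw [← hsub]
    rw [hErf]
    rw [hflip1, hflip2] at hcore
    linarith
  have hscale : (T:ℝ)⁻¹ * SR ≥ (T:ℝ)⁻¹ * ST - (T:ℝ)⁻¹ * Erf := by
    have : (T:ℝ)⁻¹ * (ST - Erf) ≤ (T:ℝ)⁻¹ * SR := by
      apply mul_le_mul_of_nonneg_left _ (inv_nonneg.2 hTpos.le)
      linarith
    rw [mul_sub] at this
    linarith
  rw [e_total]
  have hexp : (T:ℝ)⁻¹ * ((∑ t ∈ Finset.Icc 1 T, ∑ p, f p (z t p))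
        - (T:ℝ) * (∑ p, f p (zbar p)) + SR)
      = (T:ℝ)⁻¹ * (∑ t ∈ Finset.Icc 1 T, ∑ p, f p (z t p))
        - ((T:ℝ)⁻¹ * (T:ℝ)) * (∑ p, f p (zbar p)) + (T:ℝ)⁻¹ * SR := by ring
  rw [hexp, inv_mul_cancel₀ hTne, one_mul, hLin]
  linarith
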